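/- arXiv:2204.00101 — 4 statements merged into one kernel-verified Lean document; each statement's English description precedes it below -/
import Mathlib

section
/- Let Δx, Δy, Δz > 0 and let Ex, Ey, Ez : ℤ³ → ℝ be arbitrary real-valued arrays (edge-centered electric field line averages). Define for all (i,j,k) ∈ ℤ³: dBx(i,j,k) = −(Ez(i,j+1,k) − Ez(i,j,k))/Δy + (Ey(i,j,k+1) − Ey(i,j,k))/Δz, dBy(i,j,k) = (Ez(i+1,j,k) − Ez(i,j,k))/Δx − (Ex(i,j,k+1) − Ex(i,j,k))/Δz, dBz(i,j,k) = −(Ey(i+1,j,k) − Ey(i,j,k))/Δx + (Ex(i,j+1,k) − Ex(i,j,k))/Δy. Then for every (i,j,k) ∈ ℤ³: (dBx(i+1,j,k) − dBx(i,j,k))/Δx + (dBy(i,j+1,k) − dBy(i,j,k))/Δy + (dBz(i,j,k+1) − dBz(i,j,k))/Δz = 0. In other words, the discrete divergence of the constrained-transport update of the magnetic field vanishes identically, so the discrete divergence of B is preserved. -/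
/-- The discrete divergence of the constrained-transport update of the magnetic
field vanishes identically: if the face-averaged magnetic field components are
updated by the discrete curl of edge-centered electric field line averages,
then the discrete divergence of `B` is preserved. -/
theorem ct_update_div_free
    (Δx Δy Δz : ℝ) (hΔx : 0 < Δx) (hΔy : 0 < Δy) (hΔz : 0 < Δz)
    (Ex Ey Ez : ℤ × ℤ × ℤ → ℝ)
    (dBx dBy dBz : ℤ × ℤ × ℤ → ℝ)
    (hdBx : ∀ i j k : ℤ, dBx (i, j, k) =
      -(Ez (i, j + 1, k) - Ez (i, j, k)) / Δy + (Ey (i, j, k + 1) - Ey (i, j, k)) / Δz)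
    (hdBy : ∀ i j k : ℤ, dBy (i, j, k) =
      (Ez (i + 1, j, k) - Ez (i, j, k)) / Δx - (Ex (i, j, k + 1) - Ex (i, j, k)) / Δz)
    (hdBz : ∀ i j k : ℤ, dBz (i, j, k) =
      -(Ey (i + 1, j, k) - Ey (i, j, k)) / Δx + (Ex (i, j + 1, k) - Ex (i, j, k)) / Δy) :
    ∀ i j k : ℤ,
      (dBx (i + 1, j, k) - dBx (i, j, k)) / Δx
      + (dBy (i, j + 1, k) - dBy (i, j, k)) / Δy
      + (dBz (i, j, k + 1) - dBz (i, j, k)) / Δz = 0 := by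
  intro i j k
  simp only [hdBx, hdBy, hdBz]
  field_simp
  ring
end

section
/- Let n be a natural number, Δx > 0, x₀ ∈ ℝ, and let P be a real polynomial of degree at most 2n. If for every integer m with −n ≤ m ≤ n the average of P over the interval [x₀ + (m − 1/2)Δx, x₀ + (m + 1/2)Δx] is zero, i.e. ∫_{x₀+(m−1/2)Δx}^{x₀+(m+1/2)Δx} P(ξ) dξ = 0 for all such m, then P is the zero polynomial. -/
open intervalIntegral Polynomial

/-- Every real polynomial has a polynomial antiderivative. -/
lemma exists_polynomial_antiderivative (P : Polynomial ℝ) :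
    ∃ Q : Polynomial ℝ, Q.derivative = P := by
  induction P using Polynomial.induction_on' with
  | add p q hp hq =>
    obtain ⟨Qp, hQp⟩ := hp
    obtain ⟨Qq, hQq⟩ := hq
    exact ⟨Qp + Qq, by rw [derivative_add, hQp, hQq]⟩
  | monomial k a =>
    refine ⟨C (a / (k + 1)) * X ^ (k + 1), ?_⟩
    rw [derivative_C_mul, derivative_X_pow, Nat.add_sub_cancel,
      ← mul_assoc, ← C_mul, C_mul_X_pow_eq_monomial]
    congr 1
    have hk : ((k : ℝ) + 1) ≠ 0 := by positivity
    push_cast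
    field_simp

/-- A real polynomial of degree at most `2n` whose averages vanish on `2n+1`
consecutive cells of width `Δx` is the zero polynomial (uniqueness of the
finite-volume reconstruction polynomial). -/
theorem poly_vanishing_cell_averages_eq_zero
    (n : ℕ) (Δx x₀ : ℝ) (hΔx : 0 < Δx) (P : Polynomial ℝ)
    (hdeg : P.degree ≤ (2 * n : ℕ))
    (havg : ∀ m : ℤ, -(n : ℤ) ≤ m → m ≤ (n : ℤ) →
      (∫ ξ in (x₀ + ((m : ℝ) - 1/2) * Δx)..(x₀ + ((m : ℝ) + 1/2) * Δx),
        P.eval ξ) = 0) :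
    P = 0 := by
  by_contra hP
  obtain ⟨Q, hQ⟩ := exists_polynomial_antiderivative P
  have hQne : Q ≠ 0 := by
    rintro rfl; exact hP (by simpa using hQ.symm)
  have hQdeg1 : Q.natDegree ≠ 0 := by
    intro h
    have : Q.derivative = 0 := by
      rw [Polynomial.natDegree_eq_zero] at h
      obtain ⟨c, rfl⟩ := h
      simp
    exact hP (by rw [← hQ, this])
  -- FTC: cell integrals are differences of Q
  have ftc : ∀ a b : ℝ, (∫ ξ in a..b, P.eval ξ) = Q.eval b - Q.eval a := by
    intro a b
    refine intervalIntegral.integral_eq_sub_of_hasDerivAt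
      (f := fun x => Q.eval x) (f' := fun x => P.eval x) (fun x _ => ?_) ?_
    · have := Q.hasDerivAt x
      rwa [hQ] at this
    · exact P.continuous.intervalIntegrable _ _
  set R : Polynomial ℝ := Q.comp (X + C Δx) - Q with hRdef
  have hRval : ∀ x : ℝ, R.eval x = Q.eval (x + Δx) - Q.eval x := by
    intro x; simp [hRdef]
  -- degree facts for the comp
  have hlin : (X + C Δx : Polynomial ℝ).natDegree = 1 := natDegree_X_add_C Δx
  have hcompnd : (Q.comp (X + C Δx)).natDegree = Q.natDegree := by
    rw [natDegree_comp, hlin, mul_one]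
  have hcompne : Q.comp (X + C Δx) ≠ 0 := by
    intro h
    rw [h, natDegree_zero] at hcompnd
    exact hQdeg1 hcompnd.symm
  have hRdeg : R.degree < Q.degree := by
    have hdeq : (Q.comp (X + C Δx)).degree = Q.degree := by
      rw [degree_eq_natDegree hcompne, degree_eq_natDegree hQne, hcompnd]
    rw [hRdef, ← hdeq]
    refine degree_sub_lt hdeq hcompne ?_
    rw [leadingCoeff_comp (by rw [hlin]; norm_num)]
    simp [leadingCoeff_X_add_C]
  have hQnd : Q.natDegree ≤ 2 * n + 1 := by
    have hPnd : P.natDegree ≤ 2 * n := natDegree_le_iff_degree_le.mpr hdeg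
    have hne : P.coeff (Q.natDegree - 1) ≠ 0 := by
      rw [← hQ, Polynomial.coeff_derivative]
      have hidx : Q.natDegree - 1 + 1 = Q.natDegree :=
        Nat.succ_pred_eq_of_pos (Nat.pos_of_ne_zero hQdeg1)
      rw [hidx]
      apply mul_ne_zero
      · exact fun h => hQne (Polynomial.leadingCoeff_eq_zero.mp h)
      · positivity
    have hlow : Q.natDegree - 1 ≤ P.natDegree := le_natDegree_of_ne_zero hne
    omega
  have hRnd : R.natDegree < 2 * n + 1 := by
    rcases eq_or_ne R 0 with h | h
    · simp [h]
    · have : R.natDegree < Q.natDegree := by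
        have := hRdeg
        rw [degree_eq_natDegree h, degree_eq_natDegree hQne] at this
        exact_mod_cast this
      omega
  -- R vanishes on 2n+1 points
  have hR0 : R = 0 := by
    apply Polynomial.eq_zero_of_natDegree_lt_card_of_eval_eq_zero R
      (f := fun i : Fin (2 * n + 1) => x₀ + (((i : ℤ) : ℝ) - n - 1/2) * Δx)
    · intro i j hij
      have h1 : (((i : ℤ) : ℝ) - n - 1/2) * Δx = (((j : ℤ) : ℝ) - n - 1/2) * Δx := by
        linarith
      have := mul_right_cancel₀ (ne_of_gt hΔx) h1
      have h2 : ((i : ℤ) : ℝ) = ((j : ℤ) : ℝ) := by linarith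
      have h3 : (i : ℤ) = (j : ℤ) := by exact_mod_cast h2
      exact Fin.ext (by exact_mod_cast h3)
    · intro i
      set m : ℤ := (i : ℤ) - n with hm
      have him : (i : ℤ) < 2 * n + 1 := by exact_mod_cast i.isLt
      have hige : 0 ≤ (i : ℤ) := Int.ofNat_nonneg _
      have h1 : -(n : ℤ) ≤ m := by omega
      have h2 : m ≤ (n : ℤ) := by omega
      have key := havg m h1 h2
      rw [ftc] at key
      have hx : (((i : ℤ) : ℝ) - n - 1/2) = ((m : ℝ) - 1/2) := by
        push_cast [hm]; ring
      rw [hRval, hx]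
      have hb : x₀ + ((m : ℝ) - 1/2) * Δx + Δx = x₀ + ((m : ℝ) + 1/2) * Δx := by
        ring
      rw [hb]
      exact key
    · simpa using hRnd
  -- Q is periodic, hence constant
  have hper : ∀ x : ℝ, Q.eval (x + Δx) = Q.eval x := by
    intro x
    have := hRval x
    rw [hR0] at this
    simp at this
    linarith
  have hpts : ∀ k : ℕ, Q.eval (x₀ + k * Δx) = Q.eval x₀ := by
    intro k
    induction k with
    | zero => simp
    | succ k ih =>
      have : x₀ + (k + 1 : ℕ) * Δx = (x₀ + k * Δx) + Δx := by push_cast; ring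
      rw [this, hper, ih]
  have hconst : Q - C (Q.eval x₀) = 0 := by
    apply Polynomial.eq_zero_of_infinite_isRoot
    refine Set.infinite_of_injective_forall_mem
      (f := fun k : ℕ => x₀ + k * Δx) ?_ ?_
    · intro a b hab
      simp only [add_right_inj] at hab
      have := mul_right_cancel₀ (ne_of_gt hΔx) hab
      exact_mod_cast this
    · intro k
      simp only [Set.mem_setOf_eq, IsRoot.def, eval_sub, eval_C]
      rw [hpts k]; ring
  have : Q = C (Q.eval x₀) := by linear_combination (norm := ring_nf) hconst
  apply hP
  rw [← hQ, this, derivative_C]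
end

section
/- Let n be a natural number, Δx > 0, x₀ ∈ ℝ, and let (Q_m)_{m=−n}^{n} be arbitrary real numbers. Then there exists a unique real polynomial P of degree at most 2n such that for every integer m with −n ≤ m ≤ n, (1/Δx) ∫_{x₀+(m−1/2)Δx}^{x₀+(m+1/2)Δx} P(ξ) dξ = Q_m. -/
open intervalIntegral Polynomial

private lemma fv_key (N : ℕ) (a : ℕ → ℝ) (ha : StrictMono a) (P : Polynomial ℝ)
    (hdeg : P.degree < (N : ℕ)) (hN : 0 < N)
    (hint : ∀ j < N, (∫ ξ in (a j)..(a (j+1)), P.eval ξ) = 0) : P = 0 := by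
  rcases eq_or_ne P 0 with rfl | hP0
  · rfl
  have hcont : Continuous fun x => P.eval x := P.continuous
  set F : ℝ → ℝ := fun x => ∫ ξ in (a 0)..x, P.eval ξ with hFdef
  have hF : ∀ x : ℝ, HasDerivAt F (P.eval x) x := by
    intro x
    exact intervalIntegral.integral_hasDerivAt_right
      (hcont.intervalIntegrable _ _)
      hcont.aestronglyMeasurable.stronglyMeasurableAtFilter hcont.continuousAt
  have hFc : Continuous F := by
    rw [continuous_iff_continuousAt]
    exact fun x => (hF x).continuousAt
  have hF0 : ∀ j ≤ N, F (a j) = 0 := by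
    intro j hj
    induction j with
    | zero => simp [hFdef]
    | succ k ih =>
      have hk := ih (Nat.le_of_succ_le hj)
      have : F (a k) + (∫ ξ in (a k)..(a (k+1)), P.eval ξ) = F (a (k+1)) :=
        intervalIntegral.integral_add_adjacent_intervals
          (hcont.intervalIntegrable _ _) (hcont.intervalIntegrable _ _)
      rw [← this, hk, hint k (by omega), add_zero]
  have hroot : ∀ j < N, ∃ c ∈ Set.Ioo (a j) (a (j+1)), P.eval c = 0 := by
    intro j hj
    have hab : a j < a (j+1) := ha (lt_add_one j)
    have := exists_hasDerivAt_eq_zero hab hFc.continuousOn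
      (by rw [hF0 j (le_of_lt hj), hF0 (j+1) hj])
      (fun x _ => hF x)
    obtain ⟨c, hc, hc0⟩ := this
    exact ⟨c, hc, hc0⟩
  choose! c hc hc0 using hroot
  have hcm : ∀ i j, i < j → j < N → c i < c j := by
    intro i j hij hjN
    calc c i < a (i+1) := (hc i (lt_trans hij hjN)).2
      _ ≤ a j := ha.monotone (by omega)
      _ < c j := (hc j hjN).1
  set f : Fin N → ℝ := fun i => c i with hfdef
  have hf : Function.Injective f := by
    intro i j hij
    by_contra hne
    rcases lt_or_gt_of_ne (fun h : (i:ℕ) = (j:ℕ) => hne (Fin.ext h)) with h | h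
    · exact absurd hij (ne_of_lt (hcm i j h j.isLt))
    · exact absurd hij.symm (ne_of_lt (hcm j i h i.isLt))
  refine Polynomial.eq_zero_of_natDegree_lt_card_of_eval_eq_zero P hf
    (fun i => hc0 i i.isLt) ?_
  rw [Fintype.card_fin]
  exact (Polynomial.natDegree_lt_iff_degree_lt hP0).mpr hdeg

private lemma fv_degree_lt_succ_iff (p : Polynomial ℝ) (k : ℕ) :
    p.degree < ((k + 1 : ℕ) : WithBot ℕ) ↔ p.degree ≤ (k : ℕ) := by
  rcases eq_or_ne p 0 with rfl | h
  · simp only [Polynomial.degree_zero]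
    constructor
    · intro _; exact bot_le
    · intro _; exact_mod_cast WithBot.bot_lt_coe (k + 1)
  · rw [Polynomial.degree_eq_natDegree h]
    exact_mod_cast Nat.lt_succ_iff

/-- Existence and uniqueness of the finite-volume reconstruction polynomial:
given arbitrary prescribed cell averages `Q m` on the `2n+1` consecutive cells
of width `Δx` centered at `x₀`, there is a unique real polynomial of degree at
most `2n` whose cell averages coincide with the data. -/
theorem existsUnique_reconstruction_polynomial
    (n : ℕ) (Δx x₀ : ℝ) (hΔx : 0 < Δx) (Q : ℤ → ℝ) :
    ∃! P : Polynomial ℝ, P.degree ≤ (2 * n : ℕ) ∧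
      ∀ m : ℤ, -(n : ℤ) ≤ m → m ≤ (n : ℤ) →
        (1 / Δx) * (∫ ξ in (x₀ + ((m : ℝ) - 1/2) * Δx)..(x₀ + ((m : ℝ) + 1/2) * Δx),
          P.eval ξ) = Q m := by
  set N : ℕ := 2 * n + 1 with hN
  set a : ℕ → ℝ := fun j => x₀ + ((j : ℝ) - (n : ℝ) - 1/2) * Δx with hadef
  have ha : StrictMono a := by
    intro i j hij
    have : (i : ℝ) < (j : ℝ) := by exact_mod_cast hij
    simp only [hadef]
    nlinarith
  -- the cell-average linear map
  have hInt : ∀ (P : Polynomial ℝ) (u v : ℝ),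
      IntervalIntegrable (fun x => P.eval x) MeasureTheory.volume u v :=
    fun P u v => P.continuous.intervalIntegrable u v
  set L : Polynomial ℝ →ₗ[ℝ] (Fin N → ℝ) :=
    { toFun := fun P i => ∫ ξ in (a i)..(a (i+1)), P.eval ξ
      map_add' := by
        intro P R
        funext i
        simp only [Polynomial.eval_add, Pi.add_apply]
        exact intervalIntegral.integral_add (hInt P _ _) (hInt R _ _)
      map_smul' := by
        intro r P
        funext i
        simp only [Polynomial.eval_smul, RingHom.id_apply, Pi.smul_apply, smul_eq_mul]
        rw [intervalIntegral.integral_const_mul] } with hLdef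
  set T : (Fin N → ℝ) →ₗ[ℝ] (Fin N → ℝ) :=
    L ∘ₗ (Polynomial.degreeLT ℝ N).subtype ∘ₗ
      (Polynomial.degreeLTEquiv ℝ N).symm.toLinearMap with hTdef
  have hTinj : Function.Injective T := by
    intro v w hvw
    have hsub : ((Polynomial.degreeLTEquiv ℝ N).symm (v - w) : Polynomial ℝ) = 0 := by
      set P : Polynomial ℝ := ((Polynomial.degreeLTEquiv ℝ N).symm (v - w) : Polynomial ℝ)
      have hmem : P ∈ Polynomial.degreeLT ℝ N :=
        ((Polynomial.degreeLTEquiv ℝ N).symm (v - w)).2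
      have hdeg : P.degree < (N : ℕ) := Polynomial.mem_degreeLT.mp hmem
      have hTz : T (v - w) = 0 := by rw [map_sub, hvw, sub_self]
      refine fv_key N a ha P hdeg (by omega) (fun j hj => ?_)
      exact congrFun hTz ⟨j, hj⟩
    have : (Polynomial.degreeLTEquiv ℝ N).symm (v - w) = 0 := Subtype.ext hsub
    have := congrArg (Polynomial.degreeLTEquiv ℝ N) this
    rw [LinearEquiv.apply_symm_apply, map_zero] at this
    exact sub_eq_zero.mp this
  have hTsurj : Function.Surjective T := LinearMap.injective_iff_surjective.mp hTinj
  -- target vector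
  obtain ⟨v, hv⟩ := hTsurj (fun i => Δx * Q ((i : ℤ) - (n : ℤ)))
  set P : Polynomial ℝ := ((Polynomial.degreeLTEquiv ℝ N).symm v : Polynomial ℝ) with hPdef
  have hPmem : P ∈ Polynomial.degreeLT ℝ N := ((Polynomial.degreeLTEquiv ℝ N).symm v).2
  have hPdeg : P.degree ≤ ((2 * n : ℕ) : WithBot ℕ) :=
    (fv_degree_lt_succ_iff P (2 * n)).mp (Polynomial.mem_degreeLT.mp hPmem)
  have hcell : ∀ m : ℤ, -(n : ℤ) ≤ m → m ≤ (n : ℤ) →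
      (∫ ξ in (x₀ + ((m : ℝ) - 1/2) * Δx)..(x₀ + ((m : ℝ) + 1/2) * Δx), P.eval ξ)
        = Δx * Q m := by
    intro m hm1 hm2
    set i : Fin N := ⟨(m + n).toNat, by omega⟩ with hidef
    have hiℤ : ((i : ℕ) : ℤ) = m + n := by
      simp only [hidef]
      exact Int.toNat_of_nonneg (by omega)
    have hiℝ : ((i : ℕ) : ℝ) = (m : ℝ) + (n : ℝ) := by exact_mod_cast congrArg Int.cast hiℤ
    have ha1 : a i = x₀ + ((m : ℝ) - 1/2) * Δx := by
      simp only [hadef, hiℝ]; ring_nf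
    have ha2 : a ((i : ℕ) + 1) = x₀ + ((m : ℝ) + 1/2) * Δx := by
      simp only [hadef]
      push_cast [hiℝ]
      ring_nf
    have hv' : (∫ ξ in (a (i : ℕ))..(a ((i : ℕ) + 1)), P.eval ξ)
        = Δx * Q ((i : ℤ) - (n : ℤ)) := congrFun hv i
    rw [ha1, ha2] at hv'
    have him : ((i : ℕ) : ℤ) - (n : ℤ) = m := by omega
    rw [him] at hv'
    exact hv'
  refine ⟨P, ⟨hPdeg, fun m hm1 hm2 => ?_⟩, ?_⟩
  · rw [hcell m hm1 hm2]
    field_simp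
  · rintro R ⟨hRdeg, hRcell⟩
    have hsub : R - P = 0 := by
      refine fv_key N a ha (R - P) ?_ (by omega) (fun j hj => ?_)
      · have : (R - P).degree ≤ ((2 * n : ℕ) : WithBot ℕ) :=
          le_trans (Polynomial.degree_sub_le R P) (max_le hRdeg hPdeg)
        exact (fv_degree_lt_succ_iff (R - P) (2 * n)).mpr this
      · have hm1 : -(n : ℤ) ≤ (j : ℤ) - n := by omega
        have hm2 : ((j : ℤ) - n) ≤ (n : ℤ) := by omega
        have hjℝ : ((((j : ℤ) - n : ℤ)) : ℝ) = (j : ℝ) - (n : ℝ) := by push_cast; ring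
        have ha1 : a j = x₀ + (((((j : ℤ) - n : ℤ)) : ℝ) - 1/2) * Δx := by
          simp only [hadef, hjℝ]
        have ha2 : a (j + 1) = x₀ + (((((j : ℤ) - n : ℤ)) : ℝ) + 1/2) * Δx := by
          simp only [hadef, hjℝ]; push_cast; ring_nf
        have hR := hRcell ((j : ℤ) - n) hm1 hm2
        have hP := hcell ((j : ℤ) - n) hm1 hm2
        have hPQ : (∫ ξ in (x₀ + (((((j : ℤ) - n : ℤ)) : ℝ)- 1/2) * Δx)..(x₀ + (((((j : ℤ) - n : ℤ)) : ℝ) + 1/2) * Δx), P.eval ξ)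
            = Δx * Q ((j : ℤ) - n) := hP
        have hRQ : (∫ ξ in (x₀ + (((((j : ℤ) - n : ℤ)) : ℝ) - 1/2) * Δx)..(x₀ + (((((j : ℤ) - n : ℤ)) : ℝ) + 1/2) * Δx), R.eval ξ)
            = Δx * Q ((j : ℤ) - n) := by
          rw [← hR]
          rw [show Δx * (1 / Δx * (∫ ξ in (x₀ + (((((j : ℤ) - n : ℤ)) : ℝ) - 1/2) * Δx)..(x₀ + (((((j : ℤ) - n : ℤ)) : ℝ) + 1/2) * Δx), R.eval ξ)) = (Δx * (1/Δx)) * (∫ ξ in (x₀ + (((((j : ℤ) - n : ℤ)) : ℝ) - 1/2) * Δx)..(x₀ + (((((j : ℤ) - n : ℤ)) : ℝ) + 1/2) * Δx), R.eval ξ) from by ring, mul_one_div, div_self (ne_of_gt hΔx), one_mul]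
        rw [ha1, ha2]
        have : (∫ ξ in (x₀ + (((((j : ℤ) - n : ℤ)) : ℝ) - 1/2) * Δx)..(x₀ + (((((j : ℤ) - n : ℤ)) : ℝ) + 1/2) * Δx), (R - P).eval ξ)
            = (∫ ξ in (x₀ + (((((j : ℤ) - n : ℤ)) : ℝ) - 1/2) * Δx)..(x₀ + (((((j : ℤ) - n : ℤ)) : ℝ) + 1/2) * Δx), R.eval ξ)
              - ∫ ξ in (x₀ + (((((j : ℤ) - n : ℤ)) : ℝ) - 1/2) * Δx)..(x₀ + (((((j : ℤ) - n : ℤ)) : ℝ) + 1/2) * Δx), P.eval ξ := by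
          simp only [Polynomial.eval_sub]
          exact intervalIntegral.integral_sub (hInt R _ _) (hInt P _ _)
        rw [this, hRQ, hPQ, sub_self]
    exact sub_eq_zero.mp hsub
end

section
/- Let Δx > 0, x_i ∈ ℝ. (a) Let Q_{i−2}, Q_{i−1}, Q_i be real numbers and P_L the unique polynomial of degree at most 2 with (1/Δx) ∫_{x_i+(m−1/2)Δx}^{x_i+(m+1/2)Δx} P_L(ξ) dξ = Q_{i+m} for m ∈ {−2, −1, 0}. Then ∫_{x_i−Δx/2}^{x_i+Δx/2} [Δx·(P_L′)² + Δx³·(P_L″)²] dξ = (13/12)(Q_{i−2} − 2Q_{i−1} + Q_i)² + (1/4)(Q_{i−2} − 4Q_{i−1} + 3Q_i)². (b) Let Q_i, Q_{i+1}, Q_{i+2} be real numbers and P_R the unique polynomial of degree at most 2 with the analogous average conditions for m ∈ {0, 1, 2}. Then ∫_{x_i−Δx/2}^{x_i+Δx/2} [Δx·(P_R′)² + Δx³·(P_R″)²] dξ = (13/12)(Q_i − 2Q_{i+1} + Q_{i+2})² + (1/4)(3Q_i − 4Q_{i+1} + Q_{i+2})². -/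
open intervalIntegral Polynomial

lemma quad_integ (a b c u v : ℝ) :
    ∫ x in u..v, (a + b * x + c * x ^ 2)
      = (a * v + b * v ^ 2 / 2 + c * v ^ 3 / 3)
        - (a * u + b * u ^ 2 / 2 + c * u ^ 3 / 3) := by
  have h : ∀ x : ℝ, HasDerivAt (fun x : ℝ => a * x + b * x ^ 2 / 2 + c * x ^ 3 / 3)
      (a + b * x + c * x ^ 2) x := by
    intro x
    have := (((hasDerivAt_id x).const_mul a).add
        (((hasDerivAt_pow 2 x).const_mul b).div_const 2)).add
        (((hasDerivAt_pow 3 x).const_mul c).div_const 3)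
    exact this.congr_deriv (by ring)
  exact intervalIntegral.integral_eq_sub_of_hasDerivAt (fun x _ => h x)
    ((Continuous.intervalIntegrable (by continuity) u v))

lemma quad_eval (P : Polynomial ℝ) (h : P.degree ≤ 2) (x : ℝ) :
    P.eval x = P.coeff 0 + P.coeff 1 * x + P.coeff 2 * x ^ 2 := by
  have h3 : P.natDegree < 3 :=
    lt_of_le_of_lt (Polynomial.natDegree_le_iff_degree_le.2 h) (by norm_num)
  rw [Polynomial.eval_eq_sum_range' h3]
  simp [Finset.sum_range_succ]

lemma quad_deriv_eval (P : Polynomial ℝ) (h : P.degree ≤ 2) (x : ℝ) :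
    P.derivative.eval x = P.coeff 1 + 2 * P.coeff 2 * x := by
  have hnd : P.natDegree ≤ 2 := Polynomial.natDegree_le_iff_degree_le.2 h
  have h2 : P.derivative.natDegree < 2 :=
    lt_of_le_of_lt (Polynomial.natDegree_derivative_le P) (by omega)
  rw [Polynomial.eval_eq_sum_range' h2]
  simp only [Finset.sum_range_succ, Finset.sum_range_zero, Polynomial.coeff_derivative]
  push_cast
  ring

lemma quad_deriv2_eval (P : Polynomial ℝ) (h : P.degree ≤ 2) (x : ℝ) :
    P.derivative.derivative.eval x = 2 * P.coeff 2 := by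
  have hnd : P.natDegree ≤ 2 := Polynomial.natDegree_le_iff_degree_le.2 h
  have h1 : P.derivative.derivative.natDegree < 1 := by
    have := Polynomial.natDegree_derivative_le P.derivative
    have := Polynomial.natDegree_derivative_le P
    omega
  rw [Polynomial.eval_eq_sum_range' h1]
  simp only [Finset.sum_range_succ, Finset.sum_range_zero, Polynomial.coeff_derivative]
  push_cast
  ring


set_option maxHeartbeats 2000000 in
/-- Closed form of the CWENO smoothness indicators for the left and right
sub-stencils: with `P_L` (resp. `P_R`) the quadratic whose cell averages over
the three cells of width `Δx` centered at `x_i − 2Δx, x_i − Δx, x_i`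
(resp. `x_i, x_i + Δx, x_i + 2Δx`) are `Q_{i−2}, Q_{i−1}, Q_i`
(resp. `Q_i, Q_{i+1}, Q_{i+2}`), one has
`IS_L = (13/12)(Q_{i−2} − 2Q_{i−1} + Q_i)² + (1/4)(Q_{i−2} − 4Q_{i−1} + 3Q_i)²`
and
`IS_R = (13/12)(Q_i − 2Q_{i+1} + Q_{i+2})² + (1/4)(3Q_i − 4Q_{i+1} + Q_{i+2})²`. -/
theorem cweno_left_right_smoothness_indicators
    (Δx xi : ℝ) (hΔx : 0 < Δx)
    (Qmm Qm Qc Qp Qpp : ℝ) (PL PR : Polynomial ℝ)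
    (hLdeg : PL.degree ≤ 2)
    (hLmm : (1 / Δx) * (∫ ξ in (xi - 5 * Δx / 2)..(xi - 3 * Δx / 2), PL.eval ξ) = Qmm)
    (hLm : (1 / Δx) * (∫ ξ in (xi - 3 * Δx / 2)..(xi - Δx / 2), PL.eval ξ) = Qm)
    (hLc : (1 / Δx) * (∫ ξ in (xi - Δx / 2)..(xi + Δx / 2), PL.eval ξ) = Qc)
    (hRdeg : PR.degree ≤ 2)
    (hRc : (1 / Δx) * (∫ ξ in (xi - Δx / 2)..(xi + Δx / 2), PR.eval ξ) = Qc)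
    (hRp : (1 / Δx) * (∫ ξ in (xi + Δx / 2)..(xi + 3 * Δx / 2), PR.eval ξ) = Qp)
    (hRpp : (1 / Δx) * (∫ ξ in (xi + 3 * Δx / 2)..(xi + 5 * Δx / 2), PR.eval ξ) = Qpp) :
    (∫ ξ in (xi - Δx / 2)..(xi + Δx / 2),
        (Δx * (PL.derivative.eval ξ) ^ 2
          + Δx ^ 3 * (PL.derivative.derivative.eval ξ) ^ 2))
      = 13 / 12 * (Qmm - 2 * Qm + Qc) ^ 2 + 1 / 4 * (Qmm - 4 * Qm + 3 * Qc) ^ 2 ∧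
    (∫ ξ in (xi - Δx / 2)..(xi + Δx / 2),
        (Δx * (PR.derivative.eval ξ) ^ 2
          + Δx ^ 3 * (PR.derivative.derivative.eval ξ) ^ 2))
      = 13 / 12 * (Qc - 2 * Qp + Qpp) ^ 2 + 1 / 4 * (3 * Qc - 4 * Qp + Qpp) ^ 2 := by
  have hne : Δx ≠ 0 := ne_of_gt hΔx
  constructor
  · set a := PL.coeff 0 with ha
    set b := PL.coeff 1 with hb
    set c := PL.coeff 2 with hc
    simp only [quad_eval PL hLdeg, quad_integ, ← ha, ← hb, ← hc] at hLmm hLm hLc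
    simp only [quad_deriv_eval PL hLdeg, quad_deriv2_eval PL hLdeg, ← hb, ← hc]
    have : (fun ξ : ℝ => Δx * (b + 2 * c * ξ) ^ 2 + Δx ^ 3 * (2 * c) ^ 2)
        = fun ξ : ℝ => (Δx * b ^ 2 + 4 * Δx ^ 3 * c ^ 2) + (4 * Δx * b * c) * ξ
            + (4 * Δx * c ^ 2) * ξ ^ 2 := funext fun ξ => by ring
    rw [show (∫ ξ in (xi - Δx / 2)..(xi + Δx / 2),
          (Δx * (b + 2 * c * ξ) ^ 2 + Δx ^ 3 * (2 * c) ^ 2))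
        = ∫ ξ in (xi - Δx / 2)..(xi + Δx / 2),
          ((Δx * b ^ 2 + 4 * Δx ^ 3 * c ^ 2) + (4 * Δx * b * c) * ξ
            + (4 * Δx * c ^ 2) * ξ ^ 2) from by rw [this], quad_integ]
    subst hLmm hLm hLc
    field_simp
    ring
  · set a := PR.coeff 0 with ha
    set b := PR.coeff 1 with hb
    set c := PR.coeff 2 with hc
    simp only [quad_eval PR hRdeg, quad_integ, ← ha, ← hb, ← hc] at hRc hRp hRpp
    simp only [quad_deriv_eval PR hRdeg, quad_deriv2_eval PR hRdeg, ← hb, ← hc]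
    have : (fun ξ : ℝ => Δx * (b + 2 * c * ξ) ^ 2 + Δx ^ 3 * (2 * c) ^ 2)
        = fun ξ : ℝ => (Δx * b ^ 2 + 4 * Δx ^ 3 * c ^ 2) + (4 * Δx * b * c) * ξ
            + (4 * Δx * c ^ 2) * ξ ^ 2 := funext fun ξ => by ring
    rw [show (∫ ξ in (xi - Δx / 2)..(xi + Δx / 2),
          (Δx * (b + 2 * c * ξ) ^ 2 + Δx ^ 3 * (2 * c) ^ 2))
        = ∫ ξ in (xi - Δx / 2)..(xi + Δx / 2),
          ((Δx * b ^ 2 + 4 * Δx ^ 3 * c ^ 2) + (4 * Δx * b * c) * ξ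
            + (4 * Δx * c ^ 2) * ξ ^ 2) from by rw [this], quad_integ]
    subst hRc hRp hRpp
    field_simp
    ring
end
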